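/- The Edmonds–Karp algorithm (Ford–Fulkerson with shortest augmenting paths by edge count) performs at most O(n·m) augmentations on a network with n vertices and m edges, and hence runs in O(n·m²) time. -/

import Mathlib

open Finset

/-- `f` is a valid flow in the network with capacities `c`, source `s`, sink `t`. -/
def IsFlow {V : Type*} [Fintype V] (c : V → V → ℝ) (s t : V) (f : V → V → ℝ) : Prop :=
  (∀ u v, 0 ≤ f u v ∧ f u v ≤ c u v) ∧
  (∀ v, v ≠ s → v ≠ t → (∑ u, f u v) = ∑ u, f v u)

/-- Residual capacity of the flow `f` w.r.t. capacities `c`. -/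
def resCap {V : Type*} (c f : V → V → ℝ) (u v : V) : ℝ :=
  c u v - f u v + f v u

/-- The consecutive pairs (edges) of a vertex path. -/
def pathPairs {V : Type*} (p : List V) : List (V × V) := p.zip p.tail

/-- `p` is an augmenting path from `s` to `t` in the resCap network of `f`. -/
def IsAugPath {V : Type*} (c f : V → V → ℝ) (s t : V) (p : List V) : Prop :=
  p.head? = some s ∧ p.getLast? = some t ∧ 2 ≤ p.length ∧ p.Nodup ∧
  ∀ e ∈ pathPairs p, 0 < resCap c f e.1 e.2

/-- Push `ε` units of flow along the path `p` (cancelling reverse flow). -/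
def augmentFlow {V : Type*} [DecidableEq V] (f : V → V → ℝ) (p : List V) (ε : ℝ) :
    V → V → ℝ :=
  fun u v => f u v + (if (u, v) ∈ pathPairs p then ε else 0)
    - (if (v, u) ∈ pathPairs p then ε else 0)

/-- One Edmonds–Karp step: augment along a *shortest* augmenting path by the
bottleneck resCap capacity. -/
def EKStep {V : Type*} [Fintype V] [DecidableEq V] (c : V → V → ℝ) (s t : V)
    (f f' : V → V → ℝ) : Prop :=
  ∃ (p : List V) (ε : ℝ),
    IsAugPath c f s t p ∧
    (∀ q : List V, IsAugPath c f s t q → p.length ≤ q.length) ∧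
    0 < ε ∧
    (∀ e ∈ pathPairs p, ε ≤ resCap c f e.1 e.2) ∧
    (∃ e ∈ pathPairs p, ε = resCap c f e.1 e.2) ∧
    f' = augmentFlow f p ε


section EK
variable {V : Type*}

/-- `k`-step iterate of a relation, stepping at the front. -/
private def RelIter (R : V → V → Prop) : ℕ → V → V → Prop
  | 0 => Eq
  | n+1 => fun a c => ∃ b, R a b ∧ RelIter R n b c

lemma relIter_single {R : V → V → Prop} {a b : V} (h : R a b) : RelIter R 1 a b :=
  ⟨b, h, rfl⟩

lemma relIter_trans {R : V → V → Prop} : ∀ {m k : ℕ} {a b c : V},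
    RelIter R m a b → RelIter R k b c → RelIter R (m + k) a c
  | 0, k, a, b, c, h1, h2 => by cases h1; simpa using h2
  | m+1, k, a, b, c, ⟨x, hx, h1⟩, h2 => by
      have := relIter_trans h1 h2
      exact (by rw [Nat.add_right_comm]; exact ⟨x, hx, this⟩)

lemma relIter_succ_back {R : V → V → Prop} : ∀ {m : ℕ} {a c : V},
    RelIter R (m + 1) a c → ∃ b, RelIter R m a b ∧ R b c
  | 0, a, c, ⟨b, hb, h⟩ => by cases h; exact ⟨a, rfl, hb⟩
  | m+1, a, c, ⟨x, hx, h⟩ => by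
      obtain ⟨b, hb, hbc⟩ := relIter_succ_back h
      exact ⟨b, ⟨x, hx, hb⟩, hbc⟩

lemma pathPairs_cons_cons (a b : V) (l : List V) :
    pathPairs (a :: b :: l) = (a, b) :: pathPairs (b :: l) := rfl

lemma pathPairs_nil : pathPairs ([] : List V) = [] := rfl
lemma pathPairs_single (a : V) : pathPairs [a] = [] := rfl

lemma pathPairs_cons_subset (a : V) (l : List V) :
    ∀ e ∈ pathPairs l, e ∈ pathPairs (a :: l) := by
  cases l with
  | nil => simp [pathPairs_nil]
  | cons b t => intro e he; rw [pathPairs_cons_cons]; exact List.mem_cons_of_mem _ he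

lemma pathPairs_append_right (l₁ l₂ : List V) :
    ∀ e ∈ pathPairs l₂, e ∈ pathPairs (l₁ ++ l₂) := by
  induction l₁ with
  | nil => simp
  | cons a l ih => intro e he; exact pathPairs_cons_subset _ _ _ (ih e he)

lemma pathPairs_getElem : ∀ (p : List V) (i : ℕ) (h : i + 1 < p.length),
    (p[i], p[i+1]) ∈ pathPairs p := by
  intro p
  induction p with
  | nil => intro i h; simp at h
  | cons a l ih =>
    intro i h
    cases l with
    | nil => simp at h
    | cons b t =>
      rw [pathPairs_cons_cons]
      cases i with
      | zero => simp
      | succ j =>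
        have h' : j + 1 < (b :: t).length := by simpa using h
        simp only [List.getElem_cons_succ]
        exact List.mem_cons_of_mem _ (ih j h')

lemma mem_pathPairs : ∀ {p : List V} {e : V × V}, e ∈ pathPairs p →
    ∃ i : ℕ, ∃ h : i + 1 < p.length, p[i] = e.1 ∧ p[i+1] = e.2 := by
  intro p
  induction p with
  | nil => intro e he; simp [pathPairs_nil] at he
  | cons a l ih =>
    intro e he
    cases l with
    | nil => simp [pathPairs_single] at he
    | cons b t =>
      rw [pathPairs_cons_cons, List.mem_cons] at he
      rcases he with he | he
      · exact ⟨0, by simp, by simp [he]⟩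
      · obtain ⟨i, h, h1, h2⟩ := ih he
        exact ⟨i + 1, by simpa using h, by simpa using h1, by simpa using h2⟩

lemma walk_to_relIter {R : V → V → Prop} : ∀ (p : List V) {u v : V},
    p.head? = some u → p.getLast? = some v → (∀ e ∈ pathPairs p, R e.1 e.2) →
    RelIter R (p.length - 1) u v := by
  intro p
  induction p with
  | nil => intro u v h; simp at h
  | cons a l ih =>
    intro u v hh hl hR
    have hau : a = u := by simpa using hh
    cases l with
    | nil =>
      have : a = v := by simpa using hl
      subst hau; subst this; exact rfl
    | cons b t =>
      have hR' : ∀ e ∈ pathPairs (b :: t), R e.1 e.2 := fun e he =>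
        hR e (pathPairs_cons_subset _ _ _ he)
      have hl' : (b :: t).getLast? = some v := by
        rwa [List.getLast?_cons_cons] at hl
      have h1 := ih (u := b) (v := v) rfl hl' hR'
      have hab : R a b := hR (a, b) (by rw [pathPairs_cons_cons]; exact List.mem_cons_self)
      subst hau
      exact ⟨b, hab, by simpa using h1⟩

lemma prefix_relIter {R : V → V → Prop} {p : List V} {s : V}
    (hh : p.head? = some s) (hR : ∀ e ∈ pathPairs p, R e.1 e.2) :
    ∀ i : ℕ, (h : i < p.length) → RelIter R i s p[i] := by
  intro i
  induction i with
  | zero =>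
    intro h
    have : p[0] = s := by
      cases p with
      | nil => simp at h
      | cons a l => simp_all [List.head?_cons]
    simp [RelIter, this]
  | succ j ih =>
    intro h
    have hj : j < p.length := by omega
    have h1 := ih hj
    have h2 : R p[j] p[j+1] := hR _ (pathPairs_getElem p j h)
    exact relIter_trans h1 (relIter_single h2)

/-- Extract a simple path from a walk. -/
lemma relIter_extract {R : V → V → Prop} : ∀ (m : ℕ) {u v : V},
    RelIter R m u v → u ≠ v →
    ∃ p : List V, p.head? = some u ∧ p.getLast? = some v ∧ p.Nodup ∧
      (∀ e ∈ pathPairs p, R e.1 e.2) ∧ p.length ≤ m + 1 ∧ 2 ≤ p.length := by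
  intro m
  induction m using Nat.strong_induction_on with
  | _ m IH =>
  intro u v hit huv
  match m, hit with
  | 0, hit => exact absurd hit huv
  | (m+1), ⟨b, hub, hit⟩ =>
    by_cases hbv : b = v
    · subst hbv
      refine ⟨[u, b], rfl, rfl, by simp [huv], ?_, by simp, by simp⟩
      intro e he
      simp only [pathPairs_cons_cons, pathPairs_single, List.mem_singleton] at he
      subst he; exact hub
    · obtain ⟨q, qh, ql, qnd, qR, qlen, qlen2⟩ := IH m (by omega) hit hbv
      by_cases huq : u ∈ q
      · obtain ⟨q₁, q₂, rfl⟩ := List.append_of_mem huq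
        refine ⟨u :: q₂, rfl, ?_, ?_, ?_, ?_, ?_⟩
        · rw [List.getLast?_append, List.getLast?_cons] at ql
          simpa [List.getLast?_cons] using ql
        · exact qnd.sublist (List.sublist_append_right q₁ (u :: q₂))
        · intro e he
          exact qR e (pathPairs_append_right q₁ (u :: q₂) e he)
        · simp only [List.length_append, List.length_cons] at qlen ⊢; omega
        · rcases q₂ with _ | ⟨x, q₂⟩
          · exfalso
            have : (q₁ ++ [u]).getLast? = some u := by simp
            rw [ql] at this
            exact huv (Option.some_injective _ this).symm
          · simp
      · refine ⟨u :: q, rfl, ?_, ?_, ?_, ?_, ?_⟩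
        · rw [List.getLast?_cons]
          rcases q with _ | ⟨x, q⟩
          · simp at qlen2
          · simpa [List.getLast?_cons] using ql
        · exact List.nodup_cons.2 ⟨huq, qnd⟩
        · intro e he
          rcases q with _ | ⟨x, q⟩
          · simp at qlen2
          · have hx : x = b := by simpa using qh
            subst hx
            rw [pathPairs_cons_cons, List.mem_cons] at he
            rcases he with rfl | he
            · exact hub
            · exact qR e he
        · simp; omega
        · simp; omega

lemma pathPairs_not_rev {p : List V} (hnd : p.Nodup) {u v : V}
    (h : (u, v) ∈ pathPairs p) : (v, u) ∉ pathPairs p := by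
  intro h'
  obtain ⟨i, hi, hi1, hi2⟩ := mem_pathPairs h
  obtain ⟨j, hj, hj1, hj2⟩ := mem_pathPairs h'
  simp only at hi1 hi2 hj1 hj2
  have e1 : i = j + 1 :=
    (List.Nodup.getElem_inj_iff hnd (hi := by omega) (hj := by omega)).1 (hi1.trans hj2.symm)
  have e2 : i + 1 = j :=
    (List.Nodup.getElem_inj_iff hnd (hi := by omega) (hj := by omega)).1 (hi2.trans hj1.symm)
  omega

variable [Fintype V] [DecidableEq V]

/-- Residual relation. -/
private def Rres (c f : V → V → ℝ) : V → V → Prop := fun u v => 0 < resCap c f u v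

lemma resCap_augment (c f : V → V → ℝ) (p : List V) (ε : ℝ) (u v : V) :
    resCap c (augmentFlow f p ε) u v = resCap c f u v
      - (if (u, v) ∈ pathPairs p then 2*ε else 0)
      + (if (v, u) ∈ pathPairs p then 2*ε else 0) := by
  simp only [resCap, augmentFlow]
  split_ifs <;> ring

lemma drop_walk {c f : V → V → ℝ} {s t : V} {p : List V}
    (hp : IsAugPath c f s t p) {i : ℕ} (hi : i < p.length) :
    RelIter (Rres c f) (p.length - i - 1) p[i] t := by
  obtain ⟨hh, hl, hlen, hnd, hR⟩ := hp
  set q := p.drop i with hq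
  have hqne : q ≠ [] := by
    simp [hq, List.drop_eq_nil_iff]; omega
  have hqh : q.head? = some p[i] := by
    rw [hq, List.drop_eq_getElem_cons hi]; rfl
  have hql : q.getLast? = some t := by
    have h2 : p.getLast? = q.getLast?.or ((p.take i).getLast?) := by
      conv_lhs => rw [← List.take_append_drop i p]
      exact List.getLast?_append
    rcases hq3 : q.getLast? with _ | x
    · exact absurd (List.getLast?_eq_none_iff.1 hq3) hqne
    · rw [hl, hq3] at h2; simpa using h2.symm
  have hqR : ∀ e ∈ pathPairs q, Rres c f e.1 e.2 := by
    intro e he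
    refine hR e ?_
    have := pathPairs_append_right (p.take i) q e he
    rwa [List.take_append_drop] at this
  have := walk_to_relIter q hqh hql hqR
  rwa [hq, List.length_drop] at this

/-- Distance lower bound along a shortest augmenting path. -/
lemma min_path_lb {c f : V → V → ℝ} {s t : V} (hst : s ≠ t) {p : List V}
    (hp : IsAugPath c f s t p)
    (hmin : ∀ q : List V, IsAugPath c f s t q → p.length ≤ q.length)
    {i j : ℕ} (hi : i < p.length) (hj : RelIter (Rres c f) j s p[i]) : i ≤ j := by
  by_contra hlt
  push_neg at hlt
  have hw := drop_walk hp hi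
  have htot : RelIter (Rres c f) (j + (p.length - i - 1)) s t := relIter_trans hj hw
  obtain ⟨q, qh, ql, qnd, qR, qlen, qlen2⟩ := relIter_extract _ htot hst
  have hq : IsAugPath c f s t q := ⟨qh, ql, qlen2, qnd, qR⟩
  have := hmin q hq
  have h2 : 2 ≤ p.length := hp.2.2.1
  omega

/-- Distances do not decrease under an Edmonds–Karp augmentation. -/
lemma mono_step {c f f' : V → V → ℝ} {s t : V} (hst : s ≠ t)
    (hstep : EKStep c s t f f') :
    ∀ m v, RelIter (Rres c f') m s v → ∃ m' ≤ m, RelIter (Rres c f) m' s v := by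
  obtain ⟨p, ε, hp, hmin, hε, hle, hsat, rfl⟩ := hstep
  intro m
  induction m using Nat.strong_induction_on with
  | _ m IH =>
  intro v hv
  match m, hv with
  | 0, hv => exact ⟨0, le_rfl, hv⟩
  | (m+1), hv =>
    obtain ⟨u, hmu, huv⟩ := relIter_succ_back hv
    obtain ⟨m'', hm''le, hm''⟩ := IH m (by omega) u hmu
    by_cases hR : Rres c f u v
    · exact ⟨m'' + 1, by omega, relIter_trans hm'' (relIter_single hR)⟩
    · have hrev : (v, u) ∈ pathPairs p := by
        by_contra hvu
        apply hR
        unfold Rres at huv ⊢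
        rw [resCap_augment] at huv
        simp only [hvu, if_false] at huv
        split_ifs at huv with h1
        · nlinarith
        · linarith
      obtain ⟨i, hi, hi1, hi2⟩ := mem_pathPairs hrev
      simp only at hi1 hi2
      -- u = p[i+1], so any R-f walk to u has length ≥ i+1
      have hub : i + 1 ≤ m'' := min_path_lb hst hp hmin hi (hi2 ▸ hm'')
      -- v = p[i] is reachable in i steps
      have hpre : RelIter (Rres c f) i s v := by
        have := prefix_relIter (R := Rres c f) hp.1 (fun e he => hp.2.2.2.2 e he) i (by omega)
        rwa [hi1] at this
      exact ⟨i, by omega, hpre⟩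

end EK
theorem edmondsKarp_augmentation_bound
    {V : Type*} [Fintype V] [DecidableEq V]
    (c : V → V → ℝ) (hc : ∀ u v, 0 ≤ c u v) (s t : V) (hst : s ≠ t)
    (K : ℕ) (g : ℕ → V → V → ℝ)
    (hg0 : g 0 = fun _ _ => 0)
    (hstep : ∀ k < K, EKStep c s t (g k) (g (k + 1))) :
    K ≤ Fintype.card V * Set.ncard {e : V × V | 0 < c e.1 e.2} := by
  classical
  have hstep' := hstep
  choose p ε hpath hmin hpos hble hsat hgsucc using hstep'
  choose e he hesat using hsat
  have hidx' : ∀ k (hk : k < K), ∃ i, ∃ h : i + 1 < (p k hk).length,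
      (p k hk)[i] = (e k hk).1 ∧ (p k hk)[i+1] = (e k hk).2 :=
    fun k hk => mem_pathPairs (he k hk)
  choose idx hidxlt hidx1 hidx2 using hidx'
  set n := Fintype.card V with hn
  have hn2 : 2 ≤ n := Fintype.one_lt_card_iff_nontrivial.mpr ⟨⟨s, t, hst⟩⟩
  -- distances never decrease over time
  have mono : ∀ a b, a ≤ b → b ≤ K → ∀ m v, RelIter (Rres c (g b)) m s v →
      ∃ m' ≤ m, RelIter (Rres c (g a)) m' s v := by
    intro a b hab hbK
    induction b, hab using Nat.le_induction with
    | base => exact fun m v h => ⟨m, le_rfl, h⟩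
    | succ b hab ih =>
      intro m v h
      obtain ⟨m1, hm1, h1⟩ := mono_step hst (hstep b (by omega)) m v h
      obtain ⟨m', hm', h'⟩ := ih (by omega) m1 v h1
      exact ⟨m', le_trans hm' hm1, h'⟩
  -- pairs with zero capacity in both directions never get residual capacity
  have inv : ∀ k, k ≤ K → ∀ u v, c u v = 0 → c v u = 0 → resCap c (g k) u v = 0 := by
    intro k
    induction k with
    | zero => intro _ u v h1 h2; simp [hg0, resCap, h1]
    | succ k ih =>
      intro hk u v h1 h2
      have hkK : k < K := by omega
      have huv := ih (by omega) u v h1 h2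
      have hvu := ih (by omega) v u h2 h1
      have hA : (u, v) ∉ pathPairs (p k hkK) := fun hmem => by
        have := (hpath k hkK).2.2.2.2 _ hmem
        simp only at this; linarith
      have hB : (v, u) ∉ pathPairs (p k hkK) := fun hmem => by
        have := (hpath k hkK).2.2.2.2 _ hmem
        simp only at this; linarith
      rw [hgsucc k hkK, resCap_augment]
      simp [hA, hB, huv]
  -- the saturated edge has positive residual capacity
  have fact1 : ∀ k (hk : k < K), 0 < resCap c (g k) (e k hk).1 (e k hk).2 :=
    fun k hk => (hpath k hk).2.2.2.2 _ (he k hk)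
  -- after saturation the residual capacity is nonpositive
  have fact2 : ∀ k (hk : k < K), resCap c (g (k+1)) (e k hk).1 (e k hk).2 ≤ 0 := by
    intro k hk
    rw [hgsucc k hk, resCap_augment]
    have hA : ((e k hk).1, (e k hk).2) ∈ pathPairs (p k hk) := he k hk
    have hB : ((e k hk).2, (e k hk).1) ∉ pathPairs (p k hk) :=
      pathPairs_not_rev (hpath k hk).2.2.2.1 hA
    rw [if_pos hA, if_neg hB]
    have h1 := hesat k hk
    have h2 := hpos k hk
    linarith
  -- between two saturations of the same edge, the reverse edge is used
  have hrev : ∀ k k' (hk : k < K) (hk' : k' < K), k < k' → e k hk = e k' hk' →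
      ∃ j, k < j ∧ j < k' ∧ ∃ hj : j < K,
        ((e k hk).2, (e k hk).1) ∈ pathPairs (p j hj) := by
    intro k k' hk hk' hlt heq
    by_contra hno
    push_neg at hno
    have key : ∀ b, k + 1 ≤ b → b ≤ k' →
        resCap c (g b) (e k hk).1 (e k hk).2 ≤ resCap c (g (k+1)) (e k hk).1 (e k hk).2 := by
      intro b hb
      induction b, hb using Nat.le_induction with
      | base => intro _; exact le_rfl
      | succ b hb ih =>
        intro hbk'
        have hbK : b < K := by omega
        have hB : ((e k hk).2, (e k hk).1) ∉ pathPairs (p b hbK) :=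
          hno b (by omega) (by omega) hbK
        have step : resCap c (g (b+1)) (e k hk).1 (e k hk).2
            ≤ resCap c (g b) (e k hk).1 (e k hk).2 := by
          rw [hgsucc b hbK, resCap_augment, if_neg hB]
          have := hpos b hbK
          split_ifs <;> linarith
        exact step.trans (ih (by omega))
    have h1 := key k' (by omega) le_rfl
    have h2 := fact2 k hk
    have h3 := fact1 k' hk'
    rw [← heq] at h3
    linarith
  -- key distance claim: indices strictly grow by 2
  have claim3 : ∀ k k' (hk : k < K) (hk' : k' < K), k < k' → e k hk = e k' hk' →
      idx k hk + 2 ≤ idx k' hk' := by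
    intro k k' hk hk' hlt heq
    obtain ⟨j, hkj, hjk', hjK, hmem⟩ := hrev k k' hk hk' hlt heq
    obtain ⟨l, hl, hl1, hl2⟩ := mem_pathPairs hmem
    simp only at hl1 hl2
    -- v = (e k).2 reachable in l steps at time j
    have hpre_j : RelIter (Rres c (g j)) l s (e k hk).2 := by
      have := prefix_relIter (R := Rres c (g j)) (hpath j hjK).1
        (fun e' he' => (hpath j hjK).2.2.2.2 e' he') l (by omega)
      rwa [hl1] at this
    obtain ⟨m1, hm1, hre1⟩ := mono k j (by omega) (by omega) l _ hpre_j
    have hlb1 : idx k hk + 1 ≤ m1 :=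
      min_path_lb hst (hpath k hk) (hmin k hk) (hidxlt k hk) ((hidx2 k hk) ▸ hre1)
    -- u reachable in idx k' steps at time k'
    have hpre_k' : RelIter (Rres c (g k')) (idx k' hk') s (e k hk).1 := by
      have := prefix_relIter (R := Rres c (g k')) (hpath k' hk').1
        (fun e' he' => (hpath k' hk').2.2.2.2 e' he') (idx k' hk') (by have := hidxlt k' hk'; omega)
      rw [hidx1 k' hk'] at this
      rwa [← heq] at this
    obtain ⟨m2, hm2, hre2⟩ := mono j k' (by omega) (by omega) _ _ hpre_k'
    have hlb2 : l + 1 ≤ m2 :=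
      min_path_lb hst (hpath j hjK) (hmin j hjK) (by omega) ((hl2) ▸ hre2)
    omega
  -- saturated edges have positive capacity in some direction
  have hEf : ∀ k (hk : k < K), 0 < c (e k hk).1 (e k hk).2 ∨ 0 < c (e k hk).2 (e k hk).1 := by
    intro k hk
    by_contra hcon
    push_neg at hcon
    have h1 : c (e k hk).1 (e k hk).2 = 0 := le_antisymm hcon.1 (hc _ _)
    have h2 : c (e k hk).2 (e k hk).1 = 0 := le_antisymm hcon.2 (hc _ _)
    have := inv k (by omega) _ _ h1 h2
    have := fact1 k hk
    linarith
  -- counting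
  let A : Finset (V × V) := Finset.univ.filter fun e' => 0 < c e'.1 e'.2
  let Ef : Finset (V × V) := Finset.univ.filter fun e' => 0 < c e'.1 e'.2 ∨ 0 < c e'.2 e'.1
  let F : ℕ → (V × V) × ℕ := fun k => if hk : k < K then (e k hk, idx k hk / 2) else ((s, s), 0)
  have hbound : ∀ k (hk : k < K), idx k hk / 2 < n / 2 := by
    intro k hk
    have h1 : idx k hk + 1 < (p k hk).length := hidxlt k hk
    have h2 : (p k hk).length ≤ n := (hpath k hk).2.2.2.1.length_le_card
    omega
  have hmaps : ∀ k ∈ Finset.range K, F k ∈ Ef ×ˢ Finset.range (n / 2) := by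
    intro k hk
    rw [Finset.mem_range] at hk
    simp only [F, dif_pos hk, Finset.mem_product, Finset.mem_range]
    exact ⟨by simp [Ef, hEf k hk], hbound k hk⟩
  have hinj : Set.InjOn F (Finset.range K) := by
    intro a ha b hb hab
    rw [Finset.coe_range, Set.mem_Iio] at ha hb
    by_contra hne
    rcases Nat.lt_or_ge a b with h | h
    · simp only [F, dif_pos ha, dif_pos hb, Prod.mk.injEq] at hab
      have := claim3 a b ha hb h hab.1
      omega
    · have h' : b < a := by omega
      simp only [F, dif_pos ha, dif_pos hb, Prod.mk.injEq] at hab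
      have := claim3 b a hb ha h' hab.1.symm
      omega
  have hK : K ≤ Ef.card * (n / 2) := by
    have h := Finset.card_le_card_of_injOn F hmaps hinj
    simpa [Finset.card_product] using h
  have hEfcard : Ef.card ≤ 2 * A.card := by
    have hsub : Ef ⊆ A ∪ A.image Prod.swap := by
      intro x hx
      simp only [Ef, Finset.mem_filter, Finset.mem_univ, true_and] at hx
      rcases hx with hx | hx
      · exact Finset.mem_union_left _ (by simp [A, hx])
      · refine Finset.mem_union_right _ ?_
        rw [Finset.mem_image]
        exact ⟨(x.2, x.1), by simp [A, hx], by simp⟩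
    calc Ef.card ≤ (A ∪ A.image Prod.swap).card := Finset.card_le_card hsub
      _ ≤ A.card + (A.image Prod.swap).card := Finset.card_union_le _ _
      _ ≤ A.card + A.card := Nat.add_le_add_left Finset.card_image_le _
      _ = 2 * A.card := by ring
  have hm : {e' : V × V | 0 < c e'.1 e'.2}.ncard = A.card := by
    rw [← Set.ncard_coe_finset]
    congr 1
    ext x
    simp [A]
  rw [hm]
  have h2 : 2 * (n / 2) ≤ n := by omega
  calc K ≤ Ef.card * (n / 2) := hK
    _ ≤ 2 * A.card * (n / 2) := by gcongr
    _ = A.card * (2 * (n / 2)) := by ring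
    _ ≤ A.card * n := by gcongr
    _ = n * A.card := by ring
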